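/- Let H be a real Hilbert space, K ⊆ H nonempty, closed and convex, and F : H → H Lipschitz with constant L > 0 and strongly monotone with constant C > 0. Then there exists a unique u ∈ K such that ⟨F(u), v − u⟩ ≥ 0 for all v ∈ K. -/

import Mathlib

open scoped RealInnerProductSpace

/-- Existence and uniqueness for the variational inequality VI(K, F): if `K ⊆ H` is
nonempty, closed and convex in a real Hilbert space and `F : H → H` is `L`-Lipschitz and
`C`-strongly monotone, then there is a unique `u ∈ K` with `⟨F u, v − u⟩ ≥ 0` for all
`v ∈ K`. -/
theorem stmt_7 {H : Type*} [NormedAddCommGroup H] [InnerProductSpace ℝ H]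
    [CompleteSpace H] (K : Set H) (hKne : K.Nonempty) (hKcl : IsClosed K)
    (hKcv : Convex ℝ K) (F : H → H) (L C : ℝ) (hL : 0 < L) (hC : 0 < C)
    (hLip : ∀ u₁ u₂ : H, ‖F u₁ - F u₂‖ ≤ L * ‖u₁ - u₂‖)
    (hmono : ∀ u₁ u₂ : H, C * ‖u₁ - u₂‖ ^ 2 ≤ ⟪F u₁ - F u₂, u₁ - u₂⟫) :
    ∃! u : H, u ∈ K ∧ ∀ v ∈ K, 0 ≤ ⟪F u, v - u⟫ := by
  obtain ⟨u₀, hu₀⟩ := hKne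
  -- the metric projection onto K
  have hproj : ∀ x : H, ∃ p, p ∈ K ∧ ∀ w ∈ K, ⟪x - p, w - p⟫ ≤ 0 := by
    intro x
    obtain ⟨p, hpK, hp⟩ :=
      exists_norm_eq_iInf_of_complete_convex ⟨u₀, hu₀⟩ hKcl.isComplete hKcv x
    exact ⟨p, hpK, (norm_eq_iInf_iff_real_inner_le_zero hKcv hpK).1 hp⟩
  choose P hPK hP using hproj
  -- P is nonexpansive
  have hPnon : ∀ x y : H, ‖P x - P y‖ ≤ ‖x - y‖ := by
    intro x y
    have h1 := hP x (P y) (hPK y)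
    have h2 := hP y (P x) (hPK x)
    have hkey : ‖P x - P y‖ ^ 2 ≤ ⟪x - y, P x - P y⟫ := by
      have := add_nonpos h1 h2
      have hinner : ⟪x - P x, P y - P x⟫ + ⟪y - P y, P x - P y⟫
          = ⟪x - y, P y - P x⟫ + ‖P x - P y‖ ^ 2 := by
        rw [@norm_sub_sq_real]
        simp [inner_sub_left, inner_sub_right, real_inner_comm,
          real_inner_self_eq_norm_sq]
        ring
      have e : ⟪x - y, P y - P x⟫ = -⟪x - y, P x - P y⟫ := by
        rw [show P y - P x = -(P x - P y) by abel, inner_neg_right]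
      have e2 : ⟪x - y, P x - P y⟫ = ⟪P x - P y, x - y⟫ := real_inner_comm _ _
      linarith
    rcases le_or_gt ‖P x - P y‖ 0 with h | h
    · exact h.trans (norm_nonneg _)
    · have hcs := real_inner_le_norm (x - y) (P x - P y)
      nlinarith
  set ρ : ℝ := C / L ^ 2 with hρ
  have hρpos : 0 < ρ := by positivity
  set T : H → H := fun u => P (u - ρ • F u) with hT
  set k : ℝ := Real.sqrt (max 0 (1 - C ^ 2 / L ^ 2)) with hk
  have hk0 : 0 ≤ k := Real.sqrt_nonneg _
  have hk1 : k < 1 := by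
    rw [hk]
    have : max 0 (1 - C ^ 2 / L ^ 2) < 1 := by
      apply max_lt one_pos
      have : 0 < C ^ 2 / L ^ 2 := by positivity
      linarith
    calc Real.sqrt (max 0 (1 - C ^ 2 / L ^ 2)) < Real.sqrt 1 :=
          Real.sqrt_lt_sqrt (le_max_left _ _) this
      _ = 1 := Real.sqrt_one
  have hTk : ∀ u v : H, ‖T u - T v‖ ≤ k * ‖u - v‖ := by
    intro u v
    have h1 : ‖T u - T v‖ ≤ ‖(u - ρ • F u) - (v - ρ • F v)‖ := hPnon _ _
    have heq : (u - ρ • F u) - (v - ρ • F v) = (u - v) - ρ • (F u - F v) := by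
      rw [smul_sub]; abel
    have h2 : ‖(u - v) - ρ • (F u - F v)‖ ^ 2
        ≤ (1 - C ^ 2 / L ^ 2) * ‖u - v‖ ^ 2 := by
      have hexp : ‖(u - v) - ρ • (F u - F v)‖ ^ 2
          = ‖u - v‖ ^ 2 - 2 * (ρ * ⟪F u - F v, u - v⟫) + ρ ^ 2 * ‖F u - F v‖ ^ 2 := by
        rw [@norm_sub_sq_real, real_inner_smul_right, norm_smul]
        rw [real_inner_comm]
        simp [abs_of_pos hρpos]
        ring
      have hmon := hmono u v
      have hlip := hLip u v
      have hsq : ‖F u - F v‖ ^ 2 ≤ L ^ 2 * ‖u - v‖ ^ 2 := by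
        nlinarith [norm_nonneg (F u - F v), norm_nonneg (u - v)]
      have hρL : ρ ^ 2 * L ^ 2 = C ^ 2 / L ^ 2 := by
        rw [hρ]; field_simp
      have h2ρC : 2 * ρ * C = 2 * (C ^ 2 / L ^ 2) := by
        rw [hρ]; field_simp
      nlinarith [sq_nonneg ρ, sq_nonneg ‖u - v‖]
    have h3 : ‖(u - v) - ρ • (F u - F v)‖ ≤ k * ‖u - v‖ := by
      have hm : (1 - C ^ 2 / L ^ 2) * ‖u - v‖ ^ 2
          ≤ max 0 (1 - C ^ 2 / L ^ 2) * ‖u - v‖ ^ 2 := by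
        nlinarith [le_max_right (0:ℝ) (1 - C ^ 2 / L ^ 2), sq_nonneg ‖u - v‖]
      have : ‖(u - v) - ρ • (F u - F v)‖
          = Real.sqrt (‖(u - v) - ρ • (F u - F v)‖ ^ 2) := by
        rw [Real.sqrt_sq (norm_nonneg _)]
      rw [this]
      calc Real.sqrt (‖(u - v) - ρ • (F u - F v)‖ ^ 2)
          ≤ Real.sqrt (max 0 (1 - C ^ 2 / L ^ 2) * ‖u - v‖ ^ 2) :=
            Real.sqrt_le_sqrt (h2.trans hm)
        _ = k * ‖u - v‖ := by
            rw [Real.sqrt_mul (le_max_left _ _), Real.sqrt_sq (norm_nonneg _), hk]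
    calc ‖T u - T v‖ ≤ ‖(u - ρ • F u) - (v - ρ • F v)‖ := h1
      _ = ‖(u - v) - ρ • (F u - F v)‖ := by rw [heq]
      _ ≤ k * ‖u - v‖ := h3
  -- Banach fixed point
  have hcontr : ContractingWith ⟨k, hk0⟩ T := by
    constructor
    · exact_mod_cast hk1
    · apply LipschitzWith.of_dist_le_mul
      intro x y
      rw [dist_eq_norm, dist_eq_norm]; exact hTk x y
  have : Nonempty H := ⟨u₀⟩
  set u : H := ContractingWith.fixedPoint T hcontr with hu
  have hfix : T u = u := hcontr.fixedPoint_isFixedPt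
  have huK : u ∈ K := by rw [← hfix]; exact hPK _
  have hVI : ∀ v ∈ K, 0 ≤ ⟪F u, v - u⟫ := by
    intro v hv
    have h := hP (u - ρ • F u) v hv
    rw [show P (u - ρ • F u) = u from hfix] at h
    have : (u - ρ • F u) - u = -(ρ • F u) := by abel
    rw [this, inner_neg_left, real_inner_smul_left] at h
    have : 0 ≤ ρ * ⟪F u, v - u⟫ := by linarith
    nlinarith
  refine ⟨u, ⟨huK, hVI⟩, ?_⟩
  rintro w ⟨hwK, hwVI⟩
  have h1 := hVI w hwK
  have h2 := hwVI u huK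
  have hm := hmono w u
  have : ⟪F w - F u, w - u⟫ ≤ 0 := by
    rw [inner_sub_left]
    have e1 : ⟪F w, w - u⟫ = -⟪F w, u - w⟫ := by
      rw [show (u : H) - w = -(w - u) by abel, inner_neg_right]; ring
    linarith [h1, h2, e1]
  have hnorm : ‖w - u‖ ^ 2 ≤ 0 := by nlinarith
  have : w - u = 0 := by
    have := sq_nonneg ‖w - u‖
    have h0 : ‖w - u‖ ^ 2 = 0 := le_antisymm hnorm this
    simpa [pow_eq_zero_iff] using h0
  exact sub_eq_zero.mp this
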